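/- If ε is a symmetrized Fitch map and (T, λ) is any edge-labeled tree explaining ε, then T displays every subsplit in the subsplit system S(ε) := { N|N' : N, N' ∈ ⋃_{m∈M} N_m[ε], both in the same N_m[ε], N ∩ N' = ∅ }. More precisely: for every color m and every two disjoint complementary neighborhoods N, N' ∈ N_m[ε], the subsplit N|N' is displayed by T. -/

import Mathlib

open SimpleGraph

/-- A phylogenetic (unrooted) tree with leaf set `X`: a finite connected acyclic
simple graph in which the leaves of `X` are injectively embedded as vertices of
degree at most one, and all other (inner) vertices have degree at least three. -/
structure PhyloTree (X : Type) where
  V : Type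
  [finV : Fintype V]
  T : SimpleGraph V
  conn : T.Connected
  acyc : T.IsAcyclic
  leaf : X → V
  leaf_inj : Function.Injective leaf
  leaf_deg : ∀ x : X, (T.neighborSet (leaf x)).ncard ≤ 1
  inner_deg : ∀ v : V, v ∉ Set.range leaf → 3 ≤ (T.neighborSet v).ncard

/-- `(t, lab)` explains `ε`: for distinct leaves `x,y`, a color `m` belongs to
`ε x y` iff the (unique) path from `x` to `y` in `t` contains an `m`-edge. -/
def Explains {X M : Type} (t : PhyloTree X) (lab : Sym2 t.V → Set M)
    (ε : X → X → Set M) : Prop :=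
  ∀ x y : X, x ≠ y → ∀ p : t.T.Walk (t.leaf x) (t.leaf y), p.IsPath →
    ∀ m : M, m ∈ ε x y ↔ ∃ e ∈ p.edges, m ∈ lab e

/-- `ε` is a symmetrized Fitch map: some edge-labeled tree explains it. -/
def IsSymFitch {X M : Type} (ε : X → X → Set M) : Prop :=
  ∃ t : PhyloTree X, ∃ lab : Sym2 t.V → Set M, Explains t lab ε

/-- The tree `t` displays the subsplit `A|B`: some edge of `t` separates the
leaves in `A` from the leaves in `B`. -/
def Displays {X : Type} (t : PhyloTree X) (A B : Set X) : Prop :=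
  ∃ u v : t.V, t.T.Adj u v ∧
    (∀ x ∈ A, (t.T.deleteEdges {s(u,v)}).Reachable (t.leaf x) u) ∧
    (∀ x ∈ B, (t.T.deleteEdges {s(u,v)}).Reachable (t.leaf x) v)

/-- The complementary neighborhood `N_m[y]` of `y` w.r.t. color `m`. -/
def Nbr {X M : Type} (ε : X → X → Set M) (m : M) (y : X) : Set X :=
  {x | x = y ∨ m ∉ ε x y}

/-- Every edge-labeled tree `(t, lab)` explaining a symmetrized Fitch map `ε`
displays every subsplit `N|N'` formed by two disjoint complementary
neighborhoods of the same color. -/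

lemma reach_of_not_mem_edges {V : Type} {G : SimpleGraph V} {a b : V}
    (p : G.Walk a b) {e : Sym2 V} (he : e ∉ p.edges) :
    (G.deleteEdges {e}).Reachable a b :=
  ⟨p.toDeleteEdges {e} (fun f hf hfe => he (by simpa using hfe ▸ hf))⟩

lemma walk_split {V : Type} {G : SimpleGraph V} {a b : V} (p : G.Walk a b) :
    p.IsPath → ∀ d : G.Dart, d ∈ p.darts →
      (G.deleteEdges {d.edge}).Reachable a d.fst ∧
      (G.deleteEdges {d.edge}).Reachable d.snd b := by
  induction p with
  | nil => intro _ d hd; simp at hd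
  | @cons u v w h q ih =>
    intro hp d hd
    rw [Walk.cons_isPath_iff] at hp
    rw [Walk.darts_cons, List.mem_cons] at hd
    rcases hd with rfl | hd
    · refine ⟨Reachable.refl _, reach_of_not_mem_edges q ?_⟩
      intro hmem
      exact hp.2 (Walk.fst_mem_support_of_mem_edges q (by simpa using hmem))
    · obtain ⟨r1, r2⟩ := ih hp.1 d hd
      have hne : s(u, v) ≠ d.edge := by
        intro hEq
        exact hp.2 (Walk.fst_mem_support_of_mem_edges q
          (hEq ▸ (List.mem_map_of_mem (f := Dart.edge) hd)))
      have hadj : (G.deleteEdges {d.edge}).Adj u v := by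
        rw [SimpleGraph.deleteEdges_adj]
        exact ⟨h, by simpa using hne⟩
      exact ⟨hadj.reachable.trans r1, r2⟩

theorem explaining_tree_displays_subsplits {X M : Type} [Fintype X]
    (ε : X → X → Set M) (hsym : ∀ x y : X, ε x y = ε y x)
    (t : PhyloTree X) (lab : Sym2 t.V → Set M) (hexp : Explains t lab ε) :
    ∀ m : M, ∀ y y' : X, Disjoint (Nbr ε m y) (Nbr ε m y') →
      Displays t (Nbr ε m y) (Nbr ε m y') := by
  classical
  intro m y y' hdisj
  -- y ≠ y' and m ∈ ε y y'
  have hyy : y ≠ y' := by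
    rintro rfl
    exact (Set.disjoint_left.mp hdisj (Or.inl rfl)) (Or.inl rfl)
  have hm : m ∈ ε y y' := by
    by_contra hmn
    exact (Set.disjoint_left.mp hdisj (Or.inl rfl))
      (Or.inr hmn)
  -- path from leaf y to leaf y'
  obtain ⟨w⟩ := t.conn.preconnected (t.leaf y) (t.leaf y')
  set p := w.toPath.val with hpdef
  have hp : p.IsPath := w.toPath.prop
  obtain ⟨e, hep, hme⟩ := (hexp y y' hyy p hp m).mp hm
  obtain ⟨d, hd, rfl⟩ := List.mem_map.mp hep
  have hsplit := walk_split p hp d hd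
  have hedge : s(d.fst, d.snd) = d.edge := rfl
  refine ⟨d.fst, d.snd, d.adj, ?_, ?_⟩
  · intro x hx
    rw [hedge]
    by_cases hxy : x = y
    · subst hxy; exact hsplit.1
    · have hmx : m ∉ ε x y := by rcases hx with h | h; exact absurd h hxy; exact h
      obtain ⟨w2⟩ := t.conn.preconnected (t.leaf x) (t.leaf y)
      have hq := (hexp x y hxy w2.toPath.val w2.toPath.prop m).not.mp hmx
      have he2 : d.edge ∉ (w2.toPath.val).edges := fun hc => hq ⟨d.edge, hc, hme⟩
      exact (reach_of_not_mem_edges _ he2).trans hsplit.1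
  · intro x hx
    rw [hedge]
    by_cases hxy : x = y'
    · subst hxy; exact hsplit.2.symm
    · have hmx : m ∉ ε x y' := by rcases hx with h | h; exact absurd h hxy; exact h
      obtain ⟨w2⟩ := t.conn.preconnected (t.leaf x) (t.leaf y')
      have hq := (hexp x y' hxy w2.toPath.val w2.toPath.prop m).not.mp hmx
      have he2 : d.edge ∉ (w2.toPath.val).edges := fun hc => hq ⟨d.edge, hc, hme⟩
      exact (reach_of_not_mem_edges _ he2).trans hsplit.2.symm
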